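/- arXiv:1203.3777 — 2 statements merged into one kernel-verified Lean document; each statement's English description precedes it below -/
import Mathlib

section
/- Let n ≥ 1 and let p ∈ W_n admit a sum-of-squares decomposition p = Σ_i f_i* f_i with f_i ∈ W_n. Then every nonzero f_i satisfies 2·deg(f_i) ≤ deg(p). Consequently, if p ∈ Σ², then p ∈ Σ²_k for every k ∈ ℕ with 2k ≥ deg(p). -/
open scoped ComplexOrder

noncomputable section

/-- The Weyl algebra `W_n`: a complex `*`-algebra generated by `a 1, …, a n` and their
adjoints, satisfying the canonical commutation relations, in which the normally ordered
monomials `(a*)^s a^t` form a basis (this pins the algebra down up to `*`-isomorphism). -/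
structure WeylAlgebra (n : ℕ) where
  carrier : Type
  [ring : Ring carrier]
  [alg : Algebra ℂ carrier]
  [starRing : StarRing carrier]
  [starModule : StarModule ℂ carrier]
  a : Fin n → carrier
  comm_aa : ∀ i j, a i * a j = a j * a i
  comm_ss : ∀ i j, star (a i) * star (a j) = star (a j) * star (a i)
  ccr : ∀ i j : Fin n, a i * star (a j) - star (a j) * a i = if i = j then 1 else 0
  basis : Module.Basis ((Fin n → ℕ) × (Fin n → ℕ)) ℂ carrier
  basis_eq : ∀ st : (Fin n → ℕ) × (Fin n → ℕ),
    basis st = (List.ofFn fun i => star (a i) ^ st.1 i).prod *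
               (List.ofFn fun i => (a i) ^ st.2 i).prod

attribute [instance] WeylAlgebra.ring WeylAlgebra.alg WeylAlgebra.starRing
  WeylAlgebra.starModule

namespace WeylAlgebra

variable {n : ℕ} (W : WeylAlgebra n)

/-- The monomial `a^t = ∏ i, (a i)^(t i)`. -/
def amon (t : Fin n → ℕ) : W.carrier := (List.ofFn fun i => W.a i ^ t i).prod

/-- The normally ordered monomial `(a*)^s a^t`. -/
def nmon (s t : Fin n → ℕ) : W.carrier :=
  (List.ofFn fun i => star (W.a i) ^ s i).prod * (List.ofFn fun i => W.a i ^ t i).prod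

/-- The `l₁`-norm of the coefficients of the (unique) normal form of `p`. -/
def l1 (p : W.carrier) : ℝ := (W.basis.repr p).sum fun _ c => ‖c‖

/-- The degree of `p`: the maximal `‖s‖₁ + ‖t‖₁` over monomials appearing in the normal
form of `p`. -/
def deg (p : W.carrier) : ℕ :=
  (W.basis.repr p).support.sup fun st => (∑ i, st.1 i) + (∑ i, st.2 i)

/-- `p` is a sum of squares, i.e. `p ∈ Σ²`. -/
def IsSOS (p : W.carrier) : Prop :=
  ∃ (N : ℕ) (f : Fin N → W.carrier), p = ∑ i, star (f i) * f i

/-- `p ∈ Σ²_k`: `p` is a sum of squares of elements of degree at most `k`. -/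
def IsSOSdeg (k : ℕ) (p : W.carrier) : Prop :=
  ∃ (N : ℕ) (f : Fin N → W.carrier), (∀ i, W.deg (f i) ≤ k) ∧ p = ∑ i, star (f i) * f i

/-- The element `g^r_c = ∑_{‖t‖₁ ≤ r} (n-1)!/(c^{‖t‖₁} (n+‖t‖₁-1)!) • a^t (a^t)*`. -/
def gpoly (c : ℝ) (r : ℕ) : W.carrier :=
  ∑ t ∈ (Fintype.piFinset fun _ : Fin n => Finset.range (r + 1)).filter
      (fun t => ∑ i, t i ≤ r),
    ((Nat.factorial (n - 1) : ℂ) /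
        ((c : ℂ) ^ (∑ i, t i) * (Nat.factorial (n + (∑ i, t i) - 1) : ℂ))) •
      (W.amon t * star (W.amon t))

/-- The value in `W` of a single letter (`Sum.inl i ↦ a i`, `Sum.inr i ↦ (a i)*`). -/
def letterVal : Fin n ⊕ Fin n → W.carrier
  | Sum.inl i => W.a i
  | Sum.inr i => star (W.a i)

/-- The value in `W` of a word (monomial) in the letters `a_1,…,a_n,a_1*,…,a_n*`. -/
def wordVal (w : List (Fin n ⊕ Fin n)) : W.carrier := (w.map W.letterVal).prod

end WeylAlgebra

/-- The domain of the Schrödinger representation: finitely supported functions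
`ℕ^n → ℂ`. -/
abbrev DSpace (n : ℕ) := (Fin n → ℕ) →₀ ℂ

/-- The number basis vector `e_m`. -/
def eVec {n : ℕ} (m : Fin n → ℕ) : DSpace n := Finsupp.single m 1

/-- The inner product `⟨f, g⟩ = ∑_m conj (f m) * g m` on `DSpace n`
(antilinear in the first argument). -/
def innerD {n : ℕ} (f g : DSpace n) : ℂ := f.sum fun m c => (starRingEnd ℂ) c * g m

/-- The Schrödinger (Fock) representation of the Weyl algebra `W` on `DSpace n`,
specified by its action on the number basis. -/
structure Schrodinger {n : ℕ} (W : WeylAlgebra n) where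
  rep : W.carrier →ₐ[ℂ] Module.End ℂ (DSpace n)
  rep_a : ∀ (i : Fin n) (m : Fin n → ℕ),
    rep (W.a i) (eVec m) =
      (Real.sqrt (m i) : ℂ) • eVec (Function.update m i (m i - 1))
  rep_astar : ∀ (i : Fin n) (m : Fin n → ℕ),
    rep (star (W.a i)) (eVec m) =
      (Real.sqrt (m i + 1) : ℂ) • eVec (Function.update m i (m i + 1))

namespace Schrodinger

variable {n : ℕ} {W : WeylAlgebra n} (S : Schrodinger W)

/-- `π(p) ≥ 0`: the quadratic form of `π(p)` is nonnegative on the domain. -/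
def PiNonneg (p : W.carrier) : Prop := ∀ φ : DSpace n, 0 ≤ innerD φ (S.rep p φ)

/-- The set of energies `⟨φ, π(p) φ⟩` over normalized `φ` in the domain. -/
def energySet (p : W.carrier) : Set ℝ :=
  { x | ∃ φ : DSpace n, innerD φ φ = 1 ∧ (innerD φ (S.rep p φ)).re = x }

/-- `λ_inf(p)`, the infimum of `⟨φ, π(p) φ⟩` over normalized `φ`. -/
def lambdaInf (p : W.carrier) : ℝ := sInf (S.energySet p)

end Schrodinger


section SOSproof


open MvPolynomial

section PolyPart

variable {n : ℕ}

abbrev Pl (n : ℕ) := MvPolynomial (Fin n ⊕ Fin n) ℂ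

def mdeg (m : (Fin n ⊕ Fin n) →₀ ℕ) : ℕ := m.sum fun _ k => k

lemma mdeg_add (m₁ m₂ : (Fin n ⊕ Fin n) →₀ ℕ) : mdeg (m₁ + m₂) = mdeg m₁ + mdeg m₂ :=
  Finsupp.sum_add_index' (fun _ => rfl) (fun _ _ _ => rfl)

lemma mdeg_le_totalDegree {P : Pl n} {m} (h : coeff m P ≠ 0) : mdeg m ≤ P.totalDegree :=
  MvPolynomial.le_totalDegree (by simpa [MvPolynomial.mem_support_iff] using h)

lemma degree_eq_mdeg (m : (Fin n ⊕ Fin n) →₀ ℕ) : Finsupp.degree m = mdeg m := rfl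

def small (D : ℕ) (P : Pl n) : Prop := ∀ m, D ≤ mdeg m → MvPolynomial.coeff m P = 0

lemma wsmall_zero {D : ℕ} : small D (0 : Pl n) := fun _ _ => by simp

lemma small_mono {D E : ℕ} {P : Pl n} (h : D ≤ E) (hP : small D P) : small E P :=
  fun m hm => hP m (le_trans h hm)

lemma wsmall_add {D : ℕ} {P Q : Pl n} (hP : small D P) (hQ : small D Q) : small D (P + Q) :=
  fun m hm => by simp [MvPolynomial.coeff_add, hP m hm, hQ m hm]

lemma small_smul {D : ℕ} {c : ℂ} {P : Pl n} (hP : small D P) : small D (c • P) :=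
  fun m hm => by simp [hP m hm]

lemma wsmall_sum {D : ℕ} {ι : Type*} {s : Finset ι} {g : ι → Pl n}
    (h : ∀ i ∈ s, small D (g i)) : small D (∑ i ∈ s, g i) := by
  classical
  induction s using Finset.induction_on with
  | empty => simpa using wsmall_zero
  | insert _ _ hx ih =>
    rw [Finset.sum_insert hx]
    exact wsmall_add (h _ (Finset.mem_insert_self _ _))
      (ih fun i hi => h i (Finset.mem_insert_of_mem hi))

lemma small_of_totalDegree_le {D : ℕ} {P : Pl n} (h : P.totalDegree < D) : small D P :=
  fun m hm => by
    by_contra hc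
    exact absurd (mdeg_le_totalDegree hc) (by omega)

lemma wsmall_mul {D e : ℕ} {P Q : Pl n} (hP : small D P) (hQ : Q.totalDegree ≤ e) :
    small (D + e) (P * Q) := by
  intro m hm
  rw [MvPolynomial.coeff_mul]
  refine Finset.sum_eq_zero fun x hx => ?_
  rcases Finset.HasAntidiagonal.mem_antidiagonal.mp hx with rfl
  by_cases h2 : coeff x.2 Q = 0
  · simp [h2]
  · have h2d : mdeg x.2 ≤ e := le_trans (mdeg_le_totalDegree h2) hQ
    have : D ≤ mdeg x.1 := by
      have := mdeg_add x.1 x.2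
      omega
    simp [hP _ this]

lemma small_pderiv {D : ℕ} {P : Pl n} (hP : small D P) (j : Fin n ⊕ Fin n) :
    small D (MvPolynomial.pderiv j P) := by
  classical
  rw [P.as_sum, map_sum]
  refine wsmall_sum fun m hm => ?_
  rw [MvPolynomial.pderiv_monomial]
  intro m' hm'
  rw [MvPolynomial.coeff_monomial]
  split_ifs with h
  · subst h
    have hmem : mdeg (m - Finsupp.single j 1) ≤ mdeg m := by
      have h1 : m = (m - Finsupp.single j 1) + (m - (m - Finsupp.single j 1)) := by
        ext x
        simp only [Finsupp.coe_add, Finsupp.coe_tsub, Pi.add_apply, Pi.sub_apply]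
        omega
      conv_rhs => rw [h1]
      rw [mdeg_add]
      omega
    have := hP m (le_trans hm' hmem)
    simp [this]
  · rfl

-- the conjugate-swap ring hom
def cswap : Pl n →+* Pl n :=
  (MvPolynomial.map (starRingEnd ℂ)).comp (MvPolynomial.rename Sum.swap).toRingHom

lemma cswap_monomial (m : (Fin n ⊕ Fin n) →₀ ℕ) (c : ℂ) :
    cswap (monomial m c) = monomial (m.mapDomain Sum.swap) (starRingEnd ℂ c) := by
  simp [cswap, MvPolynomial.rename_monomial, MvPolynomial.map_monomial]

lemma mapDomain_swap_invol (m : (Fin n ⊕ Fin n) →₀ ℕ) :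
    (m.mapDomain Sum.swap).mapDomain Sum.swap = m := by
  rw [← Finsupp.mapDomain_comp]
  simp [Sum.swap_swap_eq, Finsupp.mapDomain_id]

lemma swap_inj : Function.Injective (Sum.swap : Fin n ⊕ Fin n → Fin n ⊕ Fin n) :=
  fun a b h => by simpa using congrArg Sum.swap h

lemma coeff_cswap (P : Pl n) (m : (Fin n ⊕ Fin n) →₀ ℕ) :
    coeff m (cswap P) = starRingEnd ℂ (coeff (m.mapDomain Sum.swap) P) := by
  conv_lhs => rw [← mapDomain_swap_invol m]
  simp [cswap, MvPolynomial.coeff_map]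
  rw [MvPolynomial.coeff_rename_mapDomain _ swap_inj]

lemma mdeg_mapDomain_swap (m : (Fin n ⊕ Fin n) →₀ ℕ) :
    mdeg (m.mapDomain Sum.swap) = mdeg m := by
  unfold mdeg
  rw [Finsupp.sum_mapDomain_index (fun _ => rfl) (fun _ _ _ => rfl)]

lemma totalDegree_cswap_le (P : Pl n) : (cswap P).totalDegree ≤ P.totalDegree := by
  rw [MvPolynomial.totalDegree]
  apply Finset.sup_le
  intro m hm
  rw [MvPolynomial.mem_support_iff, coeff_cswap] at hm
  have : coeff (m.mapDomain Sum.swap) P ≠ 0 := fun h => hm (by simp [h])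
  calc (m.sum fun _ k => k) = mdeg (m.mapDomain Sum.swap) := (mdeg_mapDomain_swap m).symm
  _ ≤ P.totalDegree := mdeg_le_totalDegree this

lemma cswap_homogeneousComponent (d : ℕ) (P : Pl n) :
    cswap (homogeneousComponent d P) = homogeneousComponent d (cswap P) := by
  apply MvPolynomial.ext
  intro m
  rw [coeff_cswap, coeff_homogeneousComponent, coeff_homogeneousComponent, coeff_cswap]
  rw [degree_eq_mdeg, degree_eq_mdeg, mdeg_mapDomain_swap]
  split_ifs <;> simp

lemma hc_mul {d e : ℕ} {P Q : Pl n} (hP : P.totalDegree ≤ d) (hQ : Q.totalDegree ≤ e) :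
    homogeneousComponent (d + e) (P * Q) =
      homogeneousComponent d P * homogeneousComponent e Q := by
  apply MvPolynomial.ext
  intro m
  by_cases hm : mdeg m = d + e
  · rw [coeff_homogeneousComponent, degree_eq_mdeg, if_pos hm, MvPolynomial.coeff_mul,
      MvPolynomial.coeff_mul]
    refine Finset.sum_congr rfl fun x hx => ?_
    rcases Finset.HasAntidiagonal.mem_antidiagonal.mp hx with h
    have hadd : mdeg x.1 + mdeg x.2 = d + e := by rw [← mdeg_add, h]; exact hm
    rw [coeff_homogeneousComponent, coeff_homogeneousComponent, degree_eq_mdeg, degree_eq_mdeg]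
    by_cases h1 : mdeg x.1 = d
    · rw [if_pos h1, if_pos (by omega)]
    · by_cases hz : coeff x.1 P = 0
      · simp [hz, if_neg h1]
      · have : mdeg x.1 ≤ d := le_trans (mdeg_le_totalDegree hz) hP
        have h2 : ¬ mdeg x.2 ≤ e := by omega
        have hz2 : coeff x.2 Q = 0 := by
          by_contra hc
          exact h2 (le_trans (mdeg_le_totalDegree hc) hQ)
        simp [hz2, if_neg h1]
  · rw [coeff_homogeneousComponent, degree_eq_mdeg, if_neg hm]
    have : MvPolynomial.IsHomogeneous
        (homogeneousComponent d P * homogeneousComponent e Q) (d + e) :=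
      (homogeneousComponent_isHomogeneous d P).mul (homogeneousComponent_isHomogeneous e Q)
    exact (this.coeff_eq_zero (by rwa [degree_eq_mdeg])).symm

lemma small_hc_eq_zero {D : ℕ} {P : Pl n} (hP : small D P) {d : ℕ} (hd : D ≤ d) :
    homogeneousComponent d P = 0 := by
  apply MvPolynomial.ext
  intro m
  rw [coeff_homogeneousComponent, degree_eq_mdeg]
  split_ifs with h
  · simpa using hP m (by omega)
  · simp

open MvPolynomial


lemma aeval_eq_evalC {τ : Type*} (y : τ → ℂ) (p : MvPolynomial τ ℂ) : aeval y p = eval y p := by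
  rw [aeval_def, Algebra.algebraMap_self]; rfl

def vz (z : Fin n → ℂ) : Fin n ⊕ Fin n → ℂ :=
  Sum.elim (fun j => starRingEnd ℂ (z j)) z

lemma eval_cswap (z : Fin n → ℂ) (P : Pl n) :
    eval (vz z) (cswap P) = starRingEnd ℂ (eval (vz z) P) := by
  have h1 : eval (vz z) (cswap P) =
      eval₂ (starRingEnd ℂ) (vz z ∘ Sum.swap) P := by
    simp only [cswap, RingHom.comp_apply, AlgHom.toRingHom_eq_coe, RingHom.coe_coe]
    rw [eval_map, eval₂_rename]
  have h2 : (starRingEnd ℂ) (eval (vz z) P) =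
      eval₂ ((starRingEnd ℂ).comp (RingHom.id ℂ)) ((starRingEnd ℂ) ∘ (vz z)) P := by
    rw [← eval₂_comp_left]; rfl
  have hfun : vz z ∘ Sum.swap = ⇑(starRingEnd ℂ) ∘ (vz z) := by
    funext s; cases s <;> simp [vz]
  rw [h1, h2, RingHom.comp_id, hfun]

lemma realzero (Q : Pl n)
    (h : ∀ x : (Fin n ⊕ Fin n) → ℝ, eval (fun s => (x s : ℂ)) Q = 0) : Q = 0 := by
  classical
  set A : MvPolynomial (Fin n ⊕ Fin n) ℝ :=
    ∑ m ∈ Q.support, MvPolynomial.monomial m ((Q.coeff m).re) with hA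
  set B : MvPolynomial (Fin n ⊕ Fin n) ℝ :=
    ∑ m ∈ Q.support, MvPolynomial.monomial m ((Q.coeff m).im) with hB
  have coeffA : ∀ m, coeff m A = (Q.coeff m).re := by
    intro m
    rw [hA, coeff_sum]
    simp only [coeff_monomial]
    rw [Finset.sum_ite_eq' Q.support m (fun m' => (Q.coeff m').re)]
    split_ifs with hm
    · rfl
    · rw [MvPolynomial.notMem_support_iff] at hm
      simp [hm]
  have coeffB : ∀ m, coeff m B = (Q.coeff m).im := by
    intro m
    rw [hB, coeff_sum]
    simp only [coeff_monomial]
    rw [Finset.sum_ite_eq' Q.support m (fun m' => (Q.coeff m').im)]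
    split_ifs with hm
    · rfl
    · rw [MvPolynomial.notMem_support_iff] at hm
      simp [hm]
  have hQ : Q = MvPolynomial.map (algebraMap ℝ ℂ) A
      + MvPolynomial.C Complex.I * MvPolynomial.map (algebraMap ℝ ℂ) B := by
    apply MvPolynomial.ext
    intro m
    rw [coeff_add, coeff_C_mul, coeff_map, coeff_map, coeffA, coeffB]
    rw [mul_comm]
    exact_mod_cast (Complex.re_add_im (Q.coeff m)).symm
  have evalmap : ∀ (R : MvPolynomial (Fin n ⊕ Fin n) ℝ) (x : (Fin n ⊕ Fin n) → ℝ),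
      eval (fun s => (x s : ℂ)) (MvPolynomial.map (algebraMap ℝ ℂ) R)
        = algebraMap ℝ ℂ (eval x R) := by
    intro R x
    have hc : (fun s => ((x s : ℝ) : ℂ)) = ⇑(algebraMap ℝ ℂ) ∘ x := by
      funext s; simp
    rw [eval_map, hc, show eval x R = eval₂ (RingHom.id ℝ) x R from rfl, eval₂_comp_left,
      RingHom.comp_id]
  have hAB : ∀ x : (Fin n ⊕ Fin n) → ℝ, eval x A = 0 ∧ eval x B = 0 := by
    intro x
    have := h x
    rw [hQ] at this
    rw [map_add, map_mul, evalmap, evalmap, eval_C] at this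
    have hre := congrArg Complex.re this
    have him := congrArg Complex.im this
    simp at hre him
    exact ⟨hre, him⟩
  have hA0 : A = 0 := MvPolynomial.funext (fun x => by simp [(hAB x).1])
  have hB0 : B = 0 := MvPolynomial.funext (fun x => by simp [(hAB x).2])
  rw [hQ, hA0, hB0]
  simp

lemma diag_zero (P : Pl n) (h : ∀ z : Fin n → ℂ, eval (vz z) P = 0) : P = 0 := by
  set g : Fin n ⊕ Fin n → Pl n :=
    Sum.elim (fun j => X (Sum.inl j) - C Complex.I * X (Sum.inr j))
      (fun j => X (Sum.inl j) + C Complex.I * X (Sum.inr j)) with hg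
  set hsub : Fin n ⊕ Fin n → Pl n :=
    Sum.elim (fun j => C (1/2 : ℂ) * (X (Sum.inl j) + X (Sum.inr j)))
      (fun j => C (-Complex.I/2) * (X (Sum.inr j) - X (Sum.inl j))) with hh
  have hI' : (C Complex.I : Pl n) * C (-Complex.I/2) = C (1/2 : ℂ) := by
    rw [← map_mul]
    congr 1
    have h := Complex.I_mul_I
    field_simp
    rw [Complex.I_sq]; ring
  have hhalf : (C (1/2 : ℂ) : Pl n) * 2 = 1 := by
    rw [show (2 : Pl n) = C (2 : ℂ) from (map_ofNat (C : ℂ →+* Pl n) 2).symm, ← map_mul]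
    norm_num
  have hinv : ∀ s, aeval hsub (g s) = X s := by
    intro s
    cases s with
    | inl j =>
      simp only [hg, Sum.elim_inl, map_sub, map_mul, aeval_X, aeval_C, hh, Sum.elim_inr]
      rw [show (algebraMap ℂ (Pl n)) Complex.I = C Complex.I from rfl]
      linear_combination (X (Sum.inl j) - X (Sum.inr j)) * hI' + X (Sum.inl j) * hhalf
    | inr j =>
      simp only [hg, Sum.elim_inr, map_add, map_mul, aeval_X, aeval_C, hh, Sum.elim_inl]
      rw [show (algebraMap ℂ (Pl n)) Complex.I = C Complex.I from rfl]
      linear_combination (X (Sum.inr j) - X (Sum.inl j)) * hI' + X (Sum.inr j) * hhalf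
  have hcomp : (aeval hsub).comp (aeval g) = AlgHom.id ℂ (Pl n) := by
    rw [comp_aeval]
    rw [show (fun s => aeval hsub (g s)) = X from funext hinv]
    exact aeval_X_left
  have hQ0 : aeval g P = 0 := by
    apply realzero
    intro x
    set z : Fin n → ℂ := fun j => (x (Sum.inl j) : ℂ) + Complex.I * (x (Sum.inr j) : ℂ) with hz
    have key : eval (fun s => (x s : ℂ)) (aeval g P) = eval (vz z) P := by
      rw [← aeval_eq_evalC, ← aeval_eq_evalC]
      have hcomp2 := comp_aeval (f := g)
        (φ := (aeval (fun s => ((x s : ℝ) : ℂ)) : Pl n →ₐ[ℂ] ℂ))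
      have e1 : aeval (R := ℂ) (fun s => ((x s : ℝ) : ℂ)) (aeval g P)
          = aeval (fun i => aeval (R := ℂ) (fun s => ((x s : ℝ) : ℂ)) (g i)) P := by
        rw [← hcomp2]; rfl
      have hfun2 : (fun i => aeval (R := ℂ) (fun s => ((x s : ℝ) : ℂ)) (g i)) = vz z := by
        funext s
        cases s with
        | inl j =>
          simp only [hg, Sum.elim_inl, map_sub, map_mul, aeval_X, aeval_C, vz, hz]
          simp [Complex.conj_ofReal, Complex.ext_iff]
        | inr j =>
          simp only [hg, Sum.elim_inr, map_add, map_mul, aeval_X, aeval_C, vz, hz]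
          simp [Complex.ext_iff]
      rw [e1, hfun2]
    rw [key]
    exact h z
  have : P = aeval hsub (aeval g P) := by
    have := congrArg (fun φ => φ P) hcomp
    simpa using this.symm
  rw [this, hQ0, map_zero]


lemma sos_cancel {N : ℕ} (P : Fin N → Pl n)
    (h : ∑ i, cswap (P i) * P i = 0) : ∀ i, P i = 0 := by
  have key : ∀ (z : Fin n → ℂ) (i : Fin N), eval (vz z) (P i) = 0 := by
    intro z
    have h1 := congrArg (eval (vz z)) h
    rw [map_sum, map_zero] at h1
    simp only [map_mul, eval_cswap] at h1
    have h2 : ∀ i, Complex.normSq (eval (vz z) (P i)) = 0 := by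
      have h3 : ((∑ i, Complex.normSq (eval (vz z) (P i)) : ℝ) : ℂ) = 0 := by
        push_cast
        rw [← h1]
        refine Finset.sum_congr rfl fun i _ => ?_
        rw [Complex.normSq_eq_conj_mul_self]
      have h4 : (∑ i, Complex.normSq (eval (vz z) (P i)) : ℝ) = 0 := by
        exact_mod_cast h3
      intro i
      exact (Finset.sum_eq_zero_iff_of_nonneg
        (fun j _ => Complex.normSq_nonneg (eval (vz z) (P j)))).mp h4 i (Finset.mem_univ i)
    intro i
    exact Complex.normSq_eq_zero.mp (h2 i)
  intro i
  exact diag_zero _ (fun z => key z i)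

end PolyPart


namespace WeylAlgebra

variable {n : ℕ} (W : WeylAlgebra n)

-- commutation basics
lemma commute_aa (i j : Fin n) : Commute (W.a i) (W.a j) := W.comm_aa i j
lemma commute_ss (i j : Fin n) : Commute (star (W.a i)) (star (W.a j)) := W.comm_ss i j
lemma commute_as {i j : Fin n} (h : i ≠ j) : Commute (W.a i) (star (W.a j)) := by
  have := W.ccr i j
  rw [if_neg h] at this
  exact sub_eq_zero.mp this
lemma ccr_self (i : Fin n) : W.a i * star (W.a i) = star (W.a i) * W.a i + 1 := by
  have := W.ccr i i
  rw [if_pos rfl] at this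
  exact sub_eq_iff_eq_add'.mp this

lemma pow_mul_star (i : Fin n) (k : ℕ) :
    W.a i ^ k * star (W.a i) = star (W.a i) * W.a i ^ k + k • W.a i ^ (k - 1) := by
  induction k with
  | zero => simp
  | succ k ih =>
    rw [pow_succ, mul_assoc, ccr_self, mul_add, mul_one, ← mul_assoc, ih, add_mul,
      smul_mul_assoc, mul_assoc, ← pow_succ, Nat.add_sub_cancel, succ_nsmul]
    have h1 : k • (W.a i ^ (k - 1) * W.a i) = k • W.a i ^ k := by
      cases k with
      | zero => simp
      | succ m => rw [Nat.add_sub_cancel, ← pow_succ]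
    rw [h1]
    abel

-- noncommProd monomials
lemma ss_pairwise (s : Fin n → ℕ) : ((Finset.univ : Finset (Fin n)) : Set (Fin n)).Pairwise
    (Function.onFun Commute fun i => star (W.a i) ^ s i) :=
  fun i _ j _ _ => (W.commute_ss i j).pow_pow _ _

lemma aa_pairwise (t : Fin n → ℕ) : ((Finset.univ : Finset (Fin n)) : Set (Fin n)).Pairwise
    (Function.onFun Commute fun i => W.a i ^ t i) :=
  fun i _ j _ _ => (W.commute_aa i j).pow_pow _ _

def spow (s : Fin n → ℕ) : W.carrier :=
  Finset.univ.noncommProd (fun i => star (W.a i) ^ s i)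
    (W.ss_pairwise s)

def apow (t : Fin n → ℕ) : W.carrier :=
  Finset.univ.noncommProd (fun i => W.a i ^ t i)
    (W.aa_pairwise t)

lemma noncomm_helper {M : Type*} [Monoid M] (l : List M) (m : Multiset M) (h : m = ↑l)
    (comm : {x | x ∈ m}.Pairwise Commute) : m.noncommProd comm = l.prod := by
  subst h
  exact Multiset.noncommProd_coe l _

lemma spow_eq_list (s : Fin n → ℕ) :
    (List.ofFn fun i => star (W.a i) ^ s i).prod = W.spow s := by
  rw [spow, Finset.noncommProd]
  exact (noncomm_helper _ _ (Fin.univ_val_map _) _).symm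

lemma apow_eq_list (t : Fin n → ℕ) :
    (List.ofFn fun i => W.a i ^ t i).prod = W.apow t := by
  rw [apow, Finset.noncommProd]
  exact (noncomm_helper _ _ (Fin.univ_val_map _) _).symm

lemma nmon_eq (s t : Fin n → ℕ) : W.nmon s t = W.spow s * W.apow t := by
  rw [nmon, spow_eq_list, apow_eq_list]

lemma basis_eq' (st : (Fin n → ℕ) × (Fin n → ℕ)) :
    W.basis st = W.spow st.1 * W.apow st.2 := by
  rw [W.basis_eq st, spow_eq_list, apow_eq_list]


lemma spow_add (s u : Fin n → ℕ) : W.spow (s + u) = W.spow s * W.spow u := by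
  rw [spow, spow, spow,
    Finset.noncommProd_congr rfl
      (g := (fun i => star (W.a i) ^ s i) * (fun i => star (W.a i) ^ u i))
      (fun x _ => by simp [Pi.add_apply, pow_add]) _,
    Finset.noncommProd_mul_distrib]
  all_goals exact fun i _ j _ _ => (W.commute_ss i j).pow_pow _ _

lemma apow_add (s u : Fin n → ℕ) : W.apow (s + u) = W.apow s * W.apow u := by
  rw [apow, apow, apow,
    Finset.noncommProd_congr rfl
      (g := (fun i => W.a i ^ s i) * (fun i => W.a i ^ u i))
      (fun x _ => by simp [Pi.add_apply, pow_add]) _,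
    Finset.noncommProd_mul_distrib]
  all_goals exact fun i _ j _ _ => (W.commute_aa i j).pow_pow _ _

lemma noncommProd_single_support {M : Type*} [Monoid M] (f : Fin n → M) (j : Fin n)
    (comm) (h : ∀ x, x ≠ j → f x = 1) :
    Finset.univ.noncommProd f comm = f j := by
  classical
  have h1 : (Finset.univ : Finset (Fin n)) = insert j (Finset.univ.erase j) :=
    (Finset.insert_erase (Finset.mem_univ j)).symm
  rw [← Finset.mul_noncommProd_erase _ (Finset.mem_univ j) f comm
      (Set.Pairwise.mono (Finset.coe_subset.mpr (Finset.erase_subset _ _)) comm),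
    Finset.noncommProd_eq_pow_card _ _ _ 1
      (fun x hx => h x (Finset.ne_of_mem_erase hx))]
  simp

lemma spow_single (j : Fin n) (k : ℕ) : W.spow (Pi.single j k) = star (W.a j) ^ k := by
  rw [spow, noncommProd_single_support _ j _ (fun x hx => by simp [Pi.single_eq_of_ne hx]),
    Pi.single_eq_same]

lemma apow_single (j : Fin n) (k : ℕ) : W.apow (Pi.single j k) = W.a j ^ k := by
  rw [apow, noncommProd_single_support _ j _ (fun x hx => by simp [Pi.single_eq_of_ne hx]),
    Pi.single_eq_same]

lemma spow_zero : W.spow 0 = 1 := by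
  rw [spow, Finset.noncommProd_eq_pow_card _ _ _ 1 (fun x _ => by simp)]
  simp

lemma apow_zero : W.apow 0 = 1 := by
  rw [apow, Finset.noncommProd_eq_pow_card _ _ _ 1 (fun x _ => by simp)]
  simp

lemma commute_star_apow (i : Fin n) (t : Fin n → ℕ) (ht : t i = 0) :
    Commute (star (W.a i)) (W.apow t) := by
  apply Finset.noncommProd_commute
  intro x _
  rcases eq_or_ne x i with rfl | hx
  · rw [ht, pow_zero]; exact Commute.one_right _
  · exact ((W.commute_as hx).symm).pow_right _

-- key exact product formulas
lemma apow_mul_star (t : Fin n → ℕ) (i : Fin n) :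
    W.apow t * star (W.a i) =
      star (W.a i) * W.apow t + (t i) • W.apow (t - Pi.single i 1) := by
  classical
  set t₀ : Fin n → ℕ := Function.update t i 0 with ht₀
  have hdec : t = t₀ + Pi.single i (t i) := by
    funext x
    rcases eq_or_ne x i with rfl | hx
    · simp [ht₀]
    · simp [ht₀, Function.update_of_ne hx, Pi.single_eq_of_ne hx]
  have ht₀i : t₀ i = 0 := by simp [ht₀]
  have hcomm := W.commute_star_apow i t₀ ht₀i
  conv_lhs => rw [hdec]
  rw [apow_add, apow_single, mul_assoc, pow_mul_star, mul_add, ← mul_assoc,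
    ← hcomm.eq, mul_assoc, ← apow_single (W := W) i (t i), ← apow_add, ← hdec]
  congr 1
  rw [mul_smul_comm]
  congr 1
  rw [← apow_single (W := W) i (t i - 1), ← apow_add]
  congr 1
  funext x
  rcases eq_or_ne x i with rfl | hx
  · simp [ht₀]
  · simp [ht₀, Function.update_of_ne hx, Pi.single_eq_of_ne hx]


lemma spow_mul_star (s : Fin n → ℕ) (i : Fin n) :
    W.spow s * star (W.a i) = W.spow (s + Pi.single i 1) := by
  rw [spow_add, spow_single, pow_one]

lemma apow_mul_a (t : Fin n → ℕ) (i : Fin n) :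
    W.apow t * W.a i = W.apow (t + Pi.single i 1) := by
  rw [apow_add, apow_single, pow_one]

lemma nmon_mul_a (s t : Fin n → ℕ) (i : Fin n) :
    W.nmon s t * W.a i = W.nmon s (t + Pi.single i 1) := by
  rw [nmon_eq, nmon_eq, mul_assoc, apow_mul_a]

lemma nmon_mul_star (s t : Fin n → ℕ) (i : Fin n) :
    W.nmon s t * star (W.a i) =
      W.nmon (s + Pi.single i 1) t + (t i) • W.nmon s (t - Pi.single i 1) := by
  rw [nmon_eq, nmon_eq, nmon_eq, mul_assoc, apow_mul_star, mul_add, ← mul_assoc,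
    spow_mul_star, mul_smul_comm]

-- induction principle
lemma pi_induction {P : (Fin n → ℕ) → Prop} (h0 : P 0)
    (hstep : ∀ t j, P t → P (t + Pi.single j 1)) : ∀ t, P t := by
  suffices h : ∀ k t, (∑ i, t i) = k → P t by
    intro t; exact h _ t rfl
  intro k
  induction k with
  | zero =>
    intro t ht
    have : t = 0 := by
      funext i
      have := (Finset.sum_eq_zero_iff.mp ht) i (Finset.mem_univ i)
      simpa using this
    rw [this]; exact h0
  | succ k ih =>
    intro t ht
    have hex : ∃ j, t j ≠ 0 := by
      by_contra hc
      push_neg at hc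
      rw [Finset.sum_eq_zero (fun i _ => hc i)] at ht
      omega
    obtain ⟨j, hj⟩ := hex
    set t' : Fin n → ℕ := Function.update t j (t j - 1) with ht'
    have hdec : t = t' + Pi.single j 1 := by
      funext x
      rcases eq_or_ne x j with rfl | hx
      · simp [ht']; omega
      · simp [ht', Function.update_of_ne hx, Pi.single_eq_of_ne hx]
    have hsum : (∑ i, t' i) = k := by
      have h1 : (∑ i, t i) = (∑ i, t' i) + 1 := by
        conv_lhs => rw [hdec]
        simp only [Pi.add_apply]
        rw [Finset.sum_add_distrib, Finset.sum_pi_single']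
        simp
      omega
    rw [hdec]
    exact hstep _ _ (ih t' hsum)

lemma star_apow (t : Fin n → ℕ) : star (W.apow t) = W.spow t := by
  induction t using pi_induction with
  | h0 => rw [apow_zero, spow_zero, star_one]
  | hstep t j ih =>
    rw [apow_add, apow_single, pow_one, star_mul, ih, add_comm, spow_add, spow_single, pow_one]

lemma star_spow (s : Fin n → ℕ) : star (W.spow s) = W.apow s := by
  induction s using pi_induction with
  | h0 => rw [apow_zero, spow_zero, star_one]
  | hstep s j ih =>
    rw [spow_add, spow_single, pow_one, star_mul, star_star, ih, add_comm, apow_add,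
      apow_single, pow_one]

lemma star_nmon (s t : Fin n → ℕ) : star (W.nmon s t) = W.nmon t s := by
  rw [nmon_eq, nmon_eq, star_mul, star_apow, star_spow]


-- the embedding of index pairs into multidegrees
def embE : ((Fin n → ℕ) × (Fin n → ℕ)) ≃ ((Fin n ⊕ Fin n) →₀ ℕ) where
  toFun st := Finsupp.equivFunOnFinite.symm (Sum.elim st.1 st.2)
  invFun m := (fun i => m (Sum.inl i), fun i => m (Sum.inr i))
  left_inv st := by
    ext x <;> simp
  right_inv m := by
    ext x
    cases x <;> simp

lemma embE_apply (st : (Fin n → ℕ) × (Fin n → ℕ)) (x : Fin n ⊕ Fin n) :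
    embE st x = Sum.elim st.1 st.2 x := rfl

def wt (st : (Fin n → ℕ) × (Fin n → ℕ)) : ℕ := (∑ i, st.1 i) + (∑ i, st.2 i)

lemma mdeg_embE (st : (Fin n → ℕ) × (Fin n → ℕ)) :
    ((embE st).sum fun _ k => k) = wt st := by
  rw [Finsupp.sum_fintype _ _ (fun _ => rfl)]
  rw [Fintype.sum_sum_type]
  rfl

lemma embE_addl (s t : Fin n → ℕ) (i : Fin n) :
    embE (s + Pi.single i 1, t) = embE (s, t) + Finsupp.single (Sum.inl i) 1 := by
  ext x
  cases x with
  | inl j =>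
    simp [embE_apply, Finsupp.single_apply, Pi.single_apply, Sum.inl.injEq, eq_comm]
  | inr j => simp [embE_apply, Finsupp.single_apply]

lemma embE_addr (s t : Fin n → ℕ) (i : Fin n) :
    embE (s, t + Pi.single i 1) = embE (s, t) + Finsupp.single (Sum.inr i) 1 := by
  ext x
  cases x with
  | inl j => simp [embE_apply, Finsupp.single_apply]
  | inr j =>
    simp [embE_apply, Finsupp.single_apply, Pi.single_apply, Sum.inr.injEq, eq_comm]

lemma embE_subr (s t : Fin n → ℕ) (i : Fin n) :
    embE (s, t - Pi.single i 1) = embE (s, t) - Finsupp.single (Sum.inr i) 1 := by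
  ext x
  rw [Finsupp.tsub_apply]
  cases x with
  | inl j => simp [embE_apply, Finsupp.single_apply]
  | inr j =>
    simp only [embE_apply, Sum.elim_inr, Finsupp.single_apply, Sum.inr.injEq]
    rw [Pi.sub_apply, Pi.single_apply]
    split_ifs <;> simp_all

-- Phi
def Phi : W.carrier →ₗ[ℂ] MvPolynomial (Fin n ⊕ Fin n) ℂ :=
  Module.Basis.constr W.basis ℂ (fun st => MvPolynomial.monomial (embE st) (1 : ℂ))

lemma Phi_basis (st : (Fin n → ℕ) × (Fin n → ℕ)) :
    W.Phi (W.basis st) = MvPolynomial.monomial (embE st) (1 : ℂ) :=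
  Module.Basis.constr_basis _ _ _ _

lemma Phi_nmon (s t : Fin n → ℕ) :
    W.Phi (W.nmon s t) = MvPolynomial.monomial (embE (s, t)) (1 : ℂ) := by
  rw [show W.nmon s t = W.basis (s, t) from (W.basis_eq (s, t)).symm, Phi_basis]

lemma coeff_Phi (p : W.carrier) (m : (Fin n ⊕ Fin n) →₀ ℕ) :
    MvPolynomial.coeff m (W.Phi p) = W.basis.repr p (embE.symm m) := by
  classical
  rw [Phi, Module.Basis.constr_apply]
  rw [Finsupp.sum]
  rw [MvPolynomial.coeff_sum]
  have : ∀ st ∈ (W.basis.repr p).support,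
      MvPolynomial.coeff m (W.basis.repr p st • MvPolynomial.monomial (embE st) (1 : ℂ))
        = if st = embE.symm m then W.basis.repr p st else 0 := by
    intro st _
    rw [MvPolynomial.coeff_smul, MvPolynomial.coeff_monomial]
    by_cases h : embE st = m
    · rw [if_pos h, if_pos ((Equiv.eq_symm_apply embE).mpr h), smul_eq_mul, mul_one]
    · rw [if_neg h, if_neg (fun hc => h ((Equiv.eq_symm_apply embE).mp hc)), smul_zero]
  rw [Finset.sum_congr rfl this, Finset.sum_ite_eq' _ (embE.symm m) (fun st => W.basis.repr p st)]
  split_ifs with hmem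
  · rfl
  · rw [Finsupp.notMem_support_iff] at hmem
    rw [hmem]


-- degree lemmas
lemma le_deg {p : W.carrier} {st} (h : st ∈ (W.basis.repr p).support) : wt st ≤ W.deg p :=
  Finset.le_sup h

lemma deg_zero : W.deg 0 = 0 := by
  simp [deg]

lemma deg_sum_le {ι : Type*} (s : Finset ι) (g : ι → W.carrier) (D : ℕ)
    (h : ∀ j ∈ s, W.deg (g j) ≤ D) : W.deg (∑ j ∈ s, g j) ≤ D := by
  refine Finset.sup_le fun st hst => ?_
  rw [Finsupp.mem_support_iff, map_sum] at hst
  have : ∃ j ∈ s, st ∈ (W.basis.repr (g j)).support := by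
    by_contra hc
    push_neg at hc
    have : (∑ j ∈ s, W.basis.repr (g j)) st = 0 := by
      rw [Finset.sum_apply']
      exact Finset.sum_eq_zero fun j hj =>
        Finsupp.notMem_support_iff.mp (hc j hj)
    exact hst this
  obtain ⟨j, hj, hmem⟩ := this
  exact le_trans (W.le_deg hmem) (h j hj)

lemma deg_smul_le (c : ℂ) (p : W.carrier) : W.deg (c • p) ≤ W.deg p := by
  refine Finset.sup_le fun st hst => ?_
  apply W.le_deg
  rw [map_smul] at hst
  exact Finsupp.support_smul hst

lemma deg_basis_le (st : (Fin n → ℕ) × (Fin n → ℕ)) : W.deg (W.basis st) ≤ wt st := by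
  refine Finset.sup_le fun st' hst' => ?_
  rw [W.basis.repr_self] at hst'
  have := Finsupp.support_single_subset hst'
  rw [Finset.mem_singleton] at this
  rw [this]
  exact le_rfl

lemma repr_expansion (p : W.carrier) :
    p = ∑ st ∈ (W.basis.repr p).support, W.basis.repr p st • W.basis st := by
  conv_lhs => rw [← W.basis.linearCombination_repr p]
  rw [Finsupp.linearCombination_apply, Finsupp.sum]

lemma star_basis (st : (Fin n → ℕ) × (Fin n → ℕ)) :
    star (W.basis st) = W.basis (st.2, st.1) := by
  rw [show W.basis st = W.nmon st.1 st.2 from W.basis_eq st, star_nmon,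
    show W.nmon st.2 st.1 = W.basis (st.2, st.1) from (W.basis_eq (st.2, st.1)).symm]

lemma star_expansion (p : W.carrier) :
    star p = ∑ st ∈ (W.basis.repr p).support,
      (starRingEnd ℂ) (W.basis.repr p st) • W.basis (st.2, st.1) := by
  conv_lhs => rw [W.repr_expansion p]
  rw [star_sum]
  refine Finset.sum_congr rfl fun st _ => ?_
  rw [star_smul, star_basis]
  rfl

lemma deg_star_le (p : W.carrier) : W.deg (star p) ≤ W.deg p := by
  rw [W.star_expansion p]
  apply W.deg_sum_le
  intro st hst
  refine le_trans (W.deg_smul_le _ _) (le_trans (W.deg_basis_le _) ?_)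
  have : wt (st.2, st.1) = wt st := by
    unfold wt; exact add_comm _ _
  rw [this]
  exact W.le_deg hst

lemma totalDegree_Phi (p : W.carrier) : (W.Phi p).totalDegree = W.deg p := by
  apply le_antisymm
  · refine Finset.sup_le fun m hm => ?_
    rw [MvPolynomial.mem_support_iff, coeff_Phi] at hm
    have h2 : mdeg m ≤ wt (embE.symm m) := by
      rw [← mdeg_embE (embE.symm m), Equiv.apply_symm_apply]
      exact le_refl _
    exact le_trans h2 (W.le_deg (Finsupp.mem_support_iff.mpr hm))
  · refine Finset.sup_le fun st hst => ?_
    have hco : MvPolynomial.coeff (embE st) (W.Phi p) ≠ 0 := by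
      rw [coeff_Phi, Equiv.symm_apply_apply]
      exact Finsupp.mem_support_iff.mp hst
    have := mdeg_le_totalDegree hco
    rw [show mdeg (embE st) = wt st from mdeg_embE st] at this
    exact this

lemma embE_swap (st : (Fin n → ℕ) × (Fin n → ℕ)) :
    Finsupp.mapDomain Sum.swap (embE st) = embE (st.2, st.1) := by
  ext x
  rw [show (Sum.swap : Fin n ⊕ Fin n → Fin n ⊕ Fin n)
      = ⇑(Equiv.sumComm (Fin n) (Fin n)) from rfl,
    Finsupp.mapDomain_equiv_apply]
  cases x <;> rfl

lemma Phi_star (p : W.carrier) : W.Phi (star p) = cswap (W.Phi p) := by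
  conv_rhs => rw [W.repr_expansion p]
  rw [W.star_expansion p, map_sum, map_sum, map_sum]
  refine Finset.sum_congr rfl fun st _ => ?_
  rw [map_smul, map_smul, Phi_basis, Phi_basis,
    MvPolynomial.smul_monomial, MvPolynomial.smul_monomial, cswap_monomial, embE_swap]
  simp

-- multiplication formulas for Phi
lemma Phi_mul_a (q : W.carrier) (i : Fin n) :
    W.Phi (q * W.a i) = W.Phi q * MvPolynomial.X (Sum.inr i) := by
  have key : (W.Phi).comp (LinearMap.mulRight ℂ (W.a i))
      = (LinearMap.mulRight ℂ (MvPolynomial.X (Sum.inr i) : Pl n)).comp W.Phi := by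
    apply Module.Basis.ext W.basis
    intro st
    simp only [LinearMap.comp_apply, LinearMap.mulRight_apply]
    rw [show W.basis st = W.nmon st.1 st.2 from W.basis_eq st, nmon_mul_a, Phi_nmon, Phi_nmon,
      MvPolynomial.X, MvPolynomial.monomial_mul, embE_addr, one_mul]
  exact LinearMap.congr_fun key q

lemma Phi_mul_astar (q : W.carrier) (i : Fin n) :
    W.Phi (q * star (W.a i)) = W.Phi q * MvPolynomial.X (Sum.inl i)
      + MvPolynomial.pderiv (Sum.inr i) (W.Phi q) := by
  have key : (W.Phi).comp (LinearMap.mulRight ℂ (star (W.a i)))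
      = (LinearMap.mulRight ℂ (MvPolynomial.X (Sum.inl i) : Pl n)).comp W.Phi
        + (MvPolynomial.pderiv (Sum.inr i)).toLinearMap.comp W.Phi := by
    apply Module.Basis.ext W.basis
    intro st
    simp only [LinearMap.comp_apply, LinearMap.mulRight_apply, LinearMap.add_apply]
    rw [show W.basis st = W.nmon st.1 st.2 from W.basis_eq st, nmon_mul_star, map_add,
      map_nsmul, Phi_nmon, Phi_nmon, Phi_nmon,
      MvPolynomial.X, MvPolynomial.monomial_mul, one_mul, embE_addl,
      show ((MvPolynomial.pderiv (Sum.inr i)).toLinearMap :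
          Pl n →ₗ[ℂ] Pl n) (MvPolynomial.monomial (embE st) 1)
        = MvPolynomial.pderiv (Sum.inr i) (MvPolynomial.monomial (embE st) 1) from rfl,
      MvPolynomial.pderiv_monomial, one_mul, ← embE_subr]
    congr 1
    rw [MvPolynomial.smul_monomial]
    congr 1
    rw [nsmul_eq_mul, mul_one]
    rfl
  exact LinearMap.congr_fun key q

lemma embE_zero : embE ((0 : Fin n → ℕ), (0 : Fin n → ℕ)) = 0 := by
  ext x
  cases x <;> rfl

lemma embE_split (st : (Fin n → ℕ) × (Fin n → ℕ)) :
    embE (st.1, (0 : Fin n → ℕ)) + embE ((0 : Fin n → ℕ), st.2) = embE st := by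
  ext x
  cases x with
  | inl j => simp [embE_apply]
  | inr j => simp [embE_apply]

lemma Phi_mul_apow (q : W.carrier) (t : Fin n → ℕ) :
    W.Phi (q * W.apow t)
      = W.Phi q * MvPolynomial.monomial (embE ((0 : Fin n → ℕ), t)) 1 := by
  induction t using pi_induction with
  | h0 =>
    rw [apow_zero, mul_one, embE_zero]
    simp
  | hstep t j ih =>
    rw [apow_add, apow_single, pow_one, ← mul_assoc, Phi_mul_a, ih, mul_assoc,
      MvPolynomial.X, MvPolynomial.monomial_mul, one_mul, embE_addr]

lemma sum_add_single (s : Fin n → ℕ) (j : Fin n) :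
    (∑ i, ((s + Pi.single j 1 : Fin n → ℕ)) i) = (∑ i, s i) + 1 := by
  simp only [Pi.add_apply]
  rw [Finset.sum_add_distrib, Finset.sum_pi_single']
  simp

lemma totalDegree_monomial_le (m : (Fin n ⊕ Fin n) →₀ ℕ) :
    (MvPolynomial.monomial m (1 : ℂ)).totalDegree ≤ mdeg m := by
  refine Finset.sup_le fun m' hm' => ?_
  rw [MvPolynomial.mem_support_iff, MvPolynomial.coeff_monomial] at hm'
  have : m = m' := by
    by_contra hc
    rw [if_neg hc] at hm'
    exact hm' rfl
  rw [← this]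
  exact le_rfl

lemma Phi_mul_spow (q : W.carrier) (s : Fin n → ℕ) (dq : ℕ)
    (hq : (W.Phi q).totalDegree ≤ dq) :
    small (dq + (∑ i, s i))
      (W.Phi (q * W.spow s)
        - W.Phi q * MvPolynomial.monomial (embE (s, (0 : Fin n → ℕ))) 1) := by
  induction s using pi_induction with
  | h0 =>
    rw [spow_zero, mul_one, embE_zero]
    simp only [MvPolynomial.monomial_zero', MvPolynomial.C_1, mul_one, sub_self]
    exact wsmall_zero
  | hstep s j ih =>
    set A := W.Phi (q * W.spow s) with hA
    set M : Pl n := MvPolynomial.monomial (embE (s, (0 : Fin n → ℕ))) 1 with hM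
    set E : Pl n := A - W.Phi q * M with hE
    have hPhiA : W.Phi (q * W.spow (s + Pi.single j 1))
        = A * MvPolynomial.X (Sum.inl j) + MvPolynomial.pderiv (Sum.inr j) A := by
      rw [spow_add, spow_single, pow_one, ← mul_assoc, Phi_mul_astar]
    have hM' : (MvPolynomial.monomial (embE (s + Pi.single j 1, (0 : Fin n → ℕ))) 1 : Pl n)
        = M * MvPolynomial.X (Sum.inl j) := by
      rw [hM, MvPolynomial.X, MvPolynomial.monomial_mul, one_mul, embE_addl]
    have hexpr : W.Phi (q * W.spow (s + Pi.single j 1))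
        - W.Phi q * MvPolynomial.monomial (embE (s + Pi.single j 1, (0 : Fin n → ℕ))) 1
        = E * MvPolynomial.X (Sum.inl j) + MvPolynomial.pderiv (Sum.inr j) A := by
      rw [hPhiA, hM', hE]
      ring
    rw [hexpr, sum_add_single, ← Nat.add_assoc]
    apply wsmall_add
    · exact wsmall_mul ih (le_of_eq (MvPolynomial.totalDegree_X _))
    · apply small_pderiv
      have hsm : small (dq + (∑ i, s i) + 1) A := by
        have h1 : A = W.Phi q * M + E := by rw [hE]; ring
        rw [h1]
        apply wsmall_add
        · apply small_of_totalDegree_le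
          have h2 := MvPolynomial.totalDegree_mul (W.Phi q) M
          have h3 : M.totalDegree ≤ ∑ i, s i := by
            refine le_trans (totalDegree_monomial_le _) ?_
            rw [show mdeg (embE (s, (0 : Fin n → ℕ))) = wt (s, 0) from mdeg_embE _]
            simp [wt]
          omega
        · exact small_mono (by omega) ih
      exact hsm

lemma Phi_mul_nmon (q : W.carrier) (s t : Fin n → ℕ) (dq : ℕ)
    (hq : (W.Phi q).totalDegree ≤ dq) :
    small (dq + wt (s, t))
      (W.Phi (q * W.nmon s t) - W.Phi q * MvPolynomial.monomial (embE (s, t)) 1) := by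
  set M1 : Pl n := MvPolynomial.monomial (embE (s, (0 : Fin n → ℕ))) 1 with hM1
  set M2 : Pl n := MvPolynomial.monomial (embE ((0 : Fin n → ℕ), t)) 1 with hM2
  set E : Pl n := W.Phi (q * W.spow s) - W.Phi q * M1 with hE
  have h1 : W.Phi (q * W.nmon s t) = W.Phi (q * W.spow s) * M2 := by
    rw [nmon_eq, ← mul_assoc, Phi_mul_apow]
  have h2 : (MvPolynomial.monomial (embE (s, t)) 1 : Pl n) = M1 * M2 := by
    rw [hM1, hM2, MvPolynomial.monomial_mul, one_mul, embE_split (s, t)]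
  have hexpr : W.Phi (q * W.nmon s t) - W.Phi q * MvPolynomial.monomial (embE (s, t)) 1
      = E * M2 := by
    rw [h1, h2, hE]
    ring
  rw [hexpr]
  have hsmE : small (dq + (∑ i, s i)) E := W.Phi_mul_spow q s dq hq
  have hM2deg : M2.totalDegree ≤ ∑ i, t i := by
    refine le_trans (totalDegree_monomial_le _) ?_
    rw [show mdeg (embE ((0 : Fin n → ℕ), t)) = wt (0, t) from mdeg_embE _]
    simp [wt]
  have := wsmall_mul hsmE hM2deg
  apply small_mono _ this
  simp [wt]
  omega

lemma Phi_mul_small (q r : W.carrier) (dq dr : ℕ) (hq : W.deg q ≤ dq) (hr : W.deg r ≤ dr) :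
    small (dq + dr) (W.Phi (q * r) - W.Phi q * W.Phi r) := by
  have hqr : q * r = ∑ st ∈ (W.basis.repr r).support,
      W.basis.repr r st • (q * W.basis st) := by
    conv_lhs => rw [W.repr_expansion r]
    rw [Finset.mul_sum]
    exact Finset.sum_congr rfl fun st _ => mul_smul_comm _ _ _
  have hPr : W.Phi q * W.Phi r = ∑ st ∈ (W.basis.repr r).support,
      W.basis.repr r st • (W.Phi q * MvPolynomial.monomial (embE st) 1) := by
    conv_lhs => rw [W.repr_expansion r]
    rw [map_sum, Finset.mul_sum]
    exact Finset.sum_congr rfl fun st _ => by rw [map_smul, Phi_basis, mul_smul_comm]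
  rw [hqr, map_sum, hPr, ← Finset.sum_sub_distrib]
  apply wsmall_sum
  intro st hst
  rw [map_smul, ← smul_sub]
  apply small_smul
  have hwt : wt st ≤ dr := le_trans (W.le_deg hst) hr
  have hPhiq : (W.Phi q).totalDegree ≤ dq := by
    rw [W.totalDegree_Phi]; exact hq
  have := W.Phi_mul_nmon q st.1 st.2 dq hPhiq
  rw [show W.basis st = W.nmon st.1 st.2 from W.basis_eq st]
  apply small_mono _ this
  have : wt (st.1, st.2) = wt st := rfl
  omega

lemma hc_top_ne_zero (p : W.carrier) (hp : p ≠ 0) :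
    MvPolynomial.homogeneousComponent (W.deg p) (W.Phi p) ≠ 0 := by
  have hne : W.basis.repr p ≠ 0 := fun h => hp (by
    have := congrArg (W.basis.repr.symm) h
    simpa using this)
  obtain ⟨st, hmem, hsup⟩ := Finset.exists_mem_eq_sup
    (W.basis.repr p).support (Finsupp.support_nonempty_iff.mpr hne)
    (fun st => (∑ i, st.1 i) + (∑ i, st.2 i))
  intro h0
  have hco := congrArg (MvPolynomial.coeff (embE st)) h0
  rw [MvPolynomial.coeff_homogeneousComponent, degree_eq_mdeg,
    show mdeg (embE st) = wt st from mdeg_embE st,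
    if_pos (show wt st = W.deg p from hsup.symm)] at hco
  rw [coeff_Phi, Equiv.symm_apply_apply] at hco
  exact Finsupp.mem_support_iff.mp hmem (by simpa using hco)

lemma main_bound (N : ℕ) (f : Fin N → W.carrier) (p : W.carrier)
    (hp : p = ∑ i, star (f i) * f i) :
    ∀ i, f i ≠ 0 → 2 * W.deg (f i) ≤ W.deg p := by
  intro i0 hi0
  set d := Finset.univ.sup (fun i => W.deg (f i)) with hd
  have hle : ∀ i, W.deg (f i) ≤ d := fun i =>
    Finset.le_sup (f := fun i => W.deg (f i)) (Finset.mem_univ i)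
  obtain ⟨j, _, hjd⟩ := Finset.exists_mem_eq_sup Finset.univ ⟨i0, Finset.mem_univ i0⟩
    (fun i => W.deg (f i))
  by_cases hd0 : d = 0
  · have := hle i0
    omega
  have hfj : f j ≠ 0 := by
    intro h
    rw [h, W.deg_zero] at hjd
    omega
  by_contra hlt
  push_neg at hlt
  have hdp : W.deg p < 2 * d := by
    have := hle i0
    omega
  -- top components
  set P : Fin N → Pl n := fun i => MvPolynomial.homogeneousComponent d (W.Phi (f i)) with hP
  have hchain : ∀ i, MvPolynomial.homogeneousComponent (d + d) (W.Phi (star (f i) * f i))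
      = cswap (P i) * P i := by
    intro i
    have hdeg1 : W.deg (star (f i)) ≤ d := le_trans (W.deg_star_le (f i)) (hle i)
    have hsm := W.Phi_mul_small (star (f i)) (f i) d d hdeg1 (hle i)
    have h1 : MvPolynomial.homogeneousComponent (d + d) (W.Phi (star (f i) * f i))
        = MvPolynomial.homogeneousComponent (d + d) (W.Phi (star (f i)) * W.Phi (f i)) := by
      have h2 := small_hc_eq_zero hsm (le_refl (d + d))
      rw [map_sub] at h2
      have := sub_eq_zero.mp h2
      exact this
    rw [h1, W.Phi_star, hc_mul (le_trans (totalDegree_cswap_le _)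
        (by rw [W.totalDegree_Phi]; exact hle i))
      (by rw [W.totalDegree_Phi]; exact hle i), cswap_homogeneousComponent]
  have hsum : ∑ i, cswap (P i) * P i = 0 := by
    have h1 : MvPolynomial.homogeneousComponent (d + d) (W.Phi p) = 0 := by
      apply small_hc_eq_zero (small_of_totalDegree_le _) (le_refl _)
      rw [W.totalDegree_Phi]
      omega
    rw [hp, map_sum, map_sum] at h1
    rw [← h1]
    exact Finset.sum_congr rfl fun i _ => (hchain i).symm
  have hPj : P j = 0 := sos_cancel P hsum j
  rw [hP] at hPj
  have := W.hc_top_ne_zero (f j) hfj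
  rw [← hjd] at this
  exact this hPj

end WeylAlgebra


end SOSproof

/-- In a sum-of-squares decomposition `p = ∑ i, f i* · f i`, every
nonzero `f i` satisfies `2·deg(f i) ≤ deg p`; consequently, any `p ∈ Σ²` lies in `Σ²_k`
whenever `2k ≥ deg p`. -/
theorem sos_degree_bound {n : ℕ} (hn : 1 ≤ n) (W : WeylAlgebra n)
    (N : ℕ) (f : Fin N → W.carrier) (p : W.carrier)
    (hp : p = ∑ i, star (f i) * f i) :
    (∀ i, f i ≠ 0 → 2 * W.deg (f i) ≤ W.deg p) ∧
    (∀ q : W.carrier, W.IsSOS q → ∀ k : ℕ, W.deg q ≤ 2 * k → W.IsSOSdeg k q) := by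
  constructor
  · exact W.main_bound N f p hp
  · intro q hq k hk
    obtain ⟨M, g, hg⟩ := hq
    refine ⟨M, g, fun i => ?_, hg⟩
    by_cases h0 : g i = 0
    · rw [h0, W.deg_zero]
      exact Nat.zero_le k
    · have := W.main_bound M g q hg i h0
      omega
end
end

section
/- In the Weyl algebra W_1, for all natural numbers l, k with 0 ≤ l ≤ k, the element a^l (a*)^k a^{k−l} belongs to Σ². -/
open scoped ComplexOrder

noncomputable section

section Aux

variable {n : ℕ} {W : WeylAlgebra n}

lemma isSOS_zero : W.IsSOS 0 := ⟨0, fun i => 0, by simp⟩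

lemma isSOS_sq (f : W.carrier) : W.IsSOS (star f * f) :=
  ⟨1, fun _ => f, by simp⟩

lemma isSOS_add {p q : W.carrier} (hp : W.IsSOS p) (hq : W.IsSOS q) :
    W.IsSOS (p + q) := by
  obtain ⟨N, f, hf⟩ := hp
  obtain ⟨M, g, hg⟩ := hq
  refine ⟨N + M, Fin.append f g, ?_⟩
  rw [Fin.sum_univ_add]
  simp [hf, hg]

lemma isSOS_nsmul {p : W.carrier} (hp : W.IsSOS p) (m : ℕ) :
    W.IsSOS (m • p) := by
  induction m with
  | zero => simpa using isSOS_zero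
  | succ m ih => rw [succ_nsmul]; exact isSOS_add ih hp

lemma weyl1_comm_pow (W : WeylAlgebra 1) (m : ℕ) :
    W.a 0 * star (W.a 0) ^ (m + 1)
      = star (W.a 0) ^ (m + 1) * W.a 0 + (m + 1) • star (W.a 0) ^ m := by
  have hccr : W.a 0 * star (W.a 0) = star (W.a 0) * W.a 0 + 1 := by
    have h := W.ccr 0 0
    simp only [if_pos rfl] at h
    calc W.a 0 * star (W.a 0)
        = star (W.a 0) * W.a 0 + (W.a 0 * star (W.a 0) - star (W.a 0) * W.a 0) := by abel
      _ = star (W.a 0) * W.a 0 + 1 := by rw [h]; simp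
  induction m with
  | zero => simpa using hccr
  | succ m ih =>
    have : W.a 0 * star (W.a 0) ^ (m + 2)
        = (W.a 0 * star (W.a 0) ^ (m + 1)) * star (W.a 0) := by
      rw [mul_assoc, ← pow_succ]
    rw [this, ih]
    rw [add_mul, smul_mul_assoc, ← pow_succ, mul_assoc, hccr, mul_add, mul_one,
      ← mul_assoc, ← pow_succ]
    rw [succ_nsmul (star (W.a 0) ^ (m + 1)) (m + 1)]
    abel

end Aux

/-- In `W₁`, for all `l ≤ k`, the element `a^l (a*)^k a^{k-l}`
belongs to `Σ²`. -/
theorem weyl1_mixed_sos (W : WeylAlgebra 1) (l k : ℕ) (h : l ≤ k) :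
    W.IsSOS (W.a 0 ^ l * star (W.a 0) ^ k * W.a 0 ^ (k - l)) := by
  induction l generalizing k with
  | zero =>
    have : W.a 0 ^ 0 * star (W.a 0) ^ k * W.a 0 ^ (k - 0)
        = star (W.a 0 ^ k) * (W.a 0 ^ k) := by
      simp [star_pow]
    rw [this]
    exact isSOS_sq _
  | succ l ih =>
    obtain ⟨m, rfl⟩ : ∃ m, k = m + 1 := ⟨k - 1, by omega⟩
    have hl : l ≤ m := by omega
    have key : W.a 0 ^ (l + 1) * star (W.a 0) ^ (m + 1) * W.a 0 ^ (m + 1 - (l + 1))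
        = W.a 0 ^ l * star (W.a 0) ^ (m + 1) * W.a 0 ^ (m + 1 - l)
          + (m + 1) • (W.a 0 ^ l * star (W.a 0) ^ m * W.a 0 ^ (m - l)) := by
      have h1 : m + 1 - (l + 1) = m - l := by omega
      have h2 : m + 1 - l = (m - l) + 1 := by omega
      rw [h1, h2, pow_succ]
      rw [mul_assoc (W.a 0 ^ l), weyl1_comm_pow]
      rw [pow_succ' (W.a 0) (m - l)]
      simp only [mul_add, add_mul, smul_mul_assoc, mul_smul_comm]
      ring_nf
      simp [mul_assoc]
    rw [key]
    exact isSOS_add (ih (m + 1) (by omega)) (isSOS_nsmul (ih m hl) (m + 1))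
end
end
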